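/- Fix r ∈ (1,∞) and let Φ:[0,∞)→[0,∞) be Φ(t) := t·log(e+t)·(log(log(e^e+t)))^r. Then Φ is strictly increasing and surjective onto [0,∞), and, denoting by Φ^{-1} its inverse, there exist constants 0 < c(r) ≤ C(r), depending only on r, such that for all s ∈ (0,1]: c(r)·s(12 − log s)(log(12 − log s))^r ≤ 1/Φ^{-1}(1/s) ≤ C(r)·s(12 − log s)(log(12 − log s))^r. -/

import Mathlib

open Set

noncomputable section

/-- The Young function `Φ(t) = t·log(e+t)·(log(log(e^e+t)))^r`. -/
def Phi19 (r t : ℝ) : ℝ :=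
  t * Real.log (Real.exp 1 + t) * Real.log (Real.log (Real.exp (Real.exp 1) + t)) ^ r

private lemma phi19_l_ge {t : ℝ} (ht : 0 ≤ t) : 1 ≤ Real.log (Real.exp 1 + t) := by
  calc (1:ℝ) = Real.log (Real.exp 1) := (Real.log_exp 1).symm
    _ ≤ Real.log (Real.exp 1 + t) := Real.log_le_log (Real.exp_pos 1) (by linarith)

private lemma phi19_inner_ge {t : ℝ} (ht : 0 ≤ t) :
    Real.exp 1 ≤ Real.log (Real.exp (Real.exp 1) + t) := by
  calc Real.exp 1 = Real.log (Real.exp (Real.exp 1)) := (Real.log_exp _).symm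
    _ ≤ _ := Real.log_le_log (Real.exp_pos _) (by linarith)

private lemma phi19_m_ge {t : ℝ} (ht : 0 ≤ t) :
    1 ≤ Real.log (Real.log (Real.exp (Real.exp 1) + t)) := by
  have h1 := phi19_inner_ge ht
  calc (1:ℝ) = Real.log (Real.exp 1) := (Real.log_exp 1).symm
    _ ≤ _ := Real.log_le_log (Real.exp_pos 1) h1

private lemma phi19_ge_self (r : ℝ) (hr : 0 ≤ r) {t : ℝ} (ht : 0 ≤ t) : t ≤ Phi19 r t := by
  have hl := phi19_l_ge ht
  have hm := phi19_m_ge ht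
  have hmr : 1 ≤ Real.log (Real.log (Real.exp (Real.exp 1) + t)) ^ r := by
    calc (1:ℝ) = (1:ℝ) ^ r := (Real.one_rpow r).symm
      _ ≤ _ := Real.rpow_le_rpow zero_le_one hm hr
  calc t ≤ t * Real.log (Real.exp 1 + t) := le_mul_of_one_le_right ht hl
    _ ≤ t * Real.log (Real.exp 1 + t) * Real.log (Real.log (Real.exp (Real.exp 1) + t)) ^ r :=
        le_mul_of_one_le_right (by nlinarith) hmr

set_option maxHeartbeats 1000000 in
theorem statement19 (r : ℝ) (hr : 1 < r) :
    StrictMonoOn (Phi19 r) (Set.Ici 0) ∧ Phi19 r '' Set.Ici 0 = Set.Ici 0 ∧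
    ∃ c C : ℝ, 0 < c ∧ c ≤ C ∧ ∀ s ∈ Set.Ioc (0 : ℝ) 1, ∀ t, 0 ≤ t → Phi19 r t = 1 / s →
      c * (s * (12 - Real.log s) * Real.log (12 - Real.log s) ^ r) ≤ 1 / t ∧
      1 / t ≤ C * (s * (12 - Real.log s) * Real.log (12 - Real.log s) ^ r) := by
  have hr0 : (0:ℝ) ≤ r := by linarith
  have he1 : (2.7182818283 : ℝ) < Real.exp 1 := Real.exp_one_gt_d9
  have he2 : Real.exp 1 < 2.7182818286 := Real.exp_one_lt_d9
  -- Strict monotonicity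
  have hmono : StrictMonoOn (Phi19 r) (Set.Ici 0) := by
    intro a ha b hb hab
    simp only [Set.mem_Ici] at ha hb
    have hb0 : 0 < b := lt_of_le_of_lt ha hab
    have hlb := phi19_l_ge hb
    have hmb := phi19_m_ge hb
    have hmbr : (0:ℝ) < Real.log (Real.log (Real.exp (Real.exp 1) + b)) ^ r :=
      Real.rpow_pos_of_pos (by linarith) r
    rcases eq_or_lt_of_le ha with rfl | ha'
    · have h0 : Phi19 r 0 = 0 := by simp [Phi19]
      rw [h0]
      unfold Phi19
      exact mul_pos (mul_pos hb0 (by linarith)) hmbr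
    · have hla := phi19_l_ge ha
      have hma := phi19_m_ge ha
      have hmar : (0:ℝ) < Real.log (Real.log (Real.exp (Real.exp 1) + a)) ^ r :=
        Real.rpow_pos_of_pos (by linarith) r
      have h1 : Real.log (Real.exp 1 + a) ≤ Real.log (Real.exp 1 + b) :=
        Real.log_le_log (by positivity) (by linarith)
      have h2 : Real.log (Real.log (Real.exp (Real.exp 1) + a)) ^ r
          ≤ Real.log (Real.log (Real.exp (Real.exp 1) + b)) ^ r := by
        apply Real.rpow_le_rpow (by linarith)
        · apply Real.log_le_log (by linarith [phi19_inner_ge ha])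
          exact Real.log_le_log (by positivity) (by linarith)
        · exact hr0
      unfold Phi19
      calc a * Real.log (Real.exp 1 + a) * Real.log (Real.log (Real.exp (Real.exp 1) + a)) ^ r
          < b * Real.log (Real.exp 1 + a) * Real.log (Real.log (Real.exp (Real.exp 1) + a)) ^ r :=
            mul_lt_mul_of_pos_right (mul_lt_mul_of_pos_right hab (by linarith)) hmar
        _ ≤ b * Real.log (Real.exp 1 + b) * Real.log (Real.log (Real.exp (Real.exp 1) + b)) ^ r :=
            mul_le_mul (mul_le_mul_of_nonneg_left h1 hb0.le) h2 hmar.le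
              (mul_nonneg hb0.le (by linarith))
  refine ⟨hmono, ?_, ?_⟩
  -- Image
  · apply Set.Subset.antisymm
    · rintro x ⟨t, ht, rfl⟩
      simp only [Set.mem_Ici] at ht ⊢
      exact le_trans ht (phi19_ge_self r hr0 ht)
    · intro y hy
      simp only [Set.mem_Ici] at hy
      have hcont : ContinuousOn (Phi19 r) (Set.Icc 0 y) := by
        have hc1 : ContinuousOn (fun t : ℝ => Real.log (Real.exp 1 + t)) (Set.Icc 0 y) := by
          apply ContinuousOn.log (by fun_prop)
          intro x hx
          have := hx.1
          positivity
        have hc2 : ContinuousOn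
            (fun t : ℝ => Real.log (Real.log (Real.exp (Real.exp 1) + t))) (Set.Icc 0 y) := by
          apply ContinuousOn.log
          · apply ContinuousOn.log (by fun_prop)
            intro x hx
            have := hx.1
            positivity
          · intro x hx
            have := phi19_inner_ge hx.1
            have := Real.exp_pos 1
            linarith
        exact (continuousOn_id.mul hc1).mul (hc2.rpow_const fun x _ => Or.inr hr0)
      have h0 : Phi19 r 0 = 0 := by simp [Phi19]
      have hyy : y ≤ Phi19 r y := phi19_ge_self r hr0 hy
      have hsub := intermediate_value_Icc hy hcont
      rw [h0] at hsub
      have : y ∈ Phi19 r '' Set.Icc 0 y := hsub ⟨hy, hyy⟩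
      exact Set.image_mono (Set.Icc_subset_Ici_self) this
  -- Main estimate
  · set K1 : ℝ := 1 + Real.log (14 + 3 * r) with hK1def
    have hlog14 : (0:ℝ) ≤ Real.log (14 + 3 * r) := Real.log_nonneg (by linarith)
    have hK1 : 1 ≤ K1 := by rw [hK1def]; linarith
    clear_value K1
    have hK1rpos : (0:ℝ) < K1 ^ r := Real.rpow_pos_of_pos (by linarith) r
    have hK1r : (1:ℝ) ≤ K1 ^ r := by
      calc (1:ℝ) = (1:ℝ) ^ r := (Real.one_rpow r).symm
        _ ≤ _ := Real.rpow_le_rpow zero_le_one hK1 hr0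
    have hc0pos : (0:ℝ) < (14 + 3 * r) * K1 ^ r := mul_pos (by linarith) hK1rpos
    refine ⟨((14 + 3 * r) * K1 ^ r)⁻¹, 2 ^ r, by positivity, ?_, ?_⟩
    · have h2r : (1:ℝ) ≤ 2 ^ r := by
        calc (1:ℝ) = (1:ℝ) ^ r := (Real.one_rpow r).symm
          _ ≤ _ := Real.rpow_le_rpow zero_le_one one_le_two hr0
      have : ((14 + 3 * r) * K1 ^ r)⁻¹ ≤ 1 := by
        rw [inv_le_one_iff₀]
        right
        have h11 : (1:ℝ) * 1 ≤ (14 + 3 * r) * K1 ^ r :=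
          mul_le_mul (by linarith) hK1r zero_le_one (by linarith)
        linarith
      linarith
    intro s hs t ht hPhi
    obtain ⟨hs0, hs1⟩ := hs
    have hF1 : 1 ≤ Phi19 r t := by rw [hPhi, le_div_iff₀ hs0]; linarith
    have ht0 : 0 < t := by
      rcases eq_or_lt_of_le ht with rfl | h
      · exfalso; norm_num [Phi19] at hF1
      · exact h
    set l := Real.log (Real.exp 1 + t) with hldef
    set m := Real.log (Real.log (Real.exp (Real.exp 1) + t)) with hmdef
    have hl1 : 1 ≤ l := phi19_l_ge ht
    have hm1 : 1 ≤ m := phi19_m_ge ht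
    have hlpos : (0:ℝ) < Real.log (Real.exp (Real.exp 1) + t) := by
      linarith [phi19_inner_ge ht, he1]
    have hm_alt : m = Real.log (Real.log (Real.exp (Real.exp 1) + t)) := hmdef
    clear_value l m
    have hmr1 : (1:ℝ) ≤ m ^ r := by
      calc (1:ℝ) = (1:ℝ) ^ r := (Real.one_rpow r).symm
        _ ≤ _ := Real.rpow_le_rpow zero_le_one hm1 hr0
    set F := Phi19 r t with hFdef
    have hFeq : F = t * l * m ^ r := by
      rw [hFdef, hldef, hmdef]; rfl
    clear_value F
    set B := Real.log F with hBdef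
    have hB0 : 0 ≤ B := hBdef ▸ Real.log_nonneg hF1
    clear_value B
    have hlogs : Real.log s = -B := by
      have hs' : s = F⁻¹ := by rw [hPhi, one_div, inv_inv]
      rw [hs', Real.log_inv, hBdef]
    -- B = log t + log l + r * log m
    have hBsum : B = Real.log t + Real.log l + r * Real.log m := by
      rw [hBdef, hFeq, Real.log_mul (by positivity) (by positivity),
        Real.log_mul (by positivity) (by linarith), Real.log_rpow (by linarith)]
    -- m ≤ 2 + log l
    have hm2 : m ≤ 2 + Real.log l := by
      have hE1 : (1:ℝ) ≤ Real.exp (Real.exp 1) := Real.one_le_exp (by positivity)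
      have step1 : Real.exp (Real.exp 1) + t ≤ Real.exp (Real.exp 1) * (Real.exp 1 + t) := by
        nlinarith [mul_le_mul_of_nonneg_right hE1 ht,
          mul_le_mul_of_nonneg_left (by linarith : (1:ℝ) ≤ Real.exp 1)
            (by linarith : (0:ℝ) ≤ Real.exp (Real.exp 1))]
      have step2 : Real.log (Real.exp (Real.exp 1) + t) ≤ Real.exp 1 + l := by
        calc Real.log (Real.exp (Real.exp 1) + t)
            ≤ Real.log (Real.exp (Real.exp 1) * (Real.exp 1 + t)) :=
              Real.log_le_log (by positivity) step1
          _ = Real.exp 1 + l := by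
              rw [Real.log_mul (by positivity) (by positivity), Real.log_exp, ← hldef]
      have step3 : m ≤ Real.log (Real.exp 1 + l) := by
        rw [hmdef]
        exact Real.log_le_log (by linarith [phi19_inner_ge ht]) step2
      have h7 : (7:ℝ) ≤ Real.exp 1 * Real.exp 1 := by
        have := mul_le_mul he1.le he1.le (by norm_num) (by linarith : (0:ℝ) ≤ Real.exp 1)
        nlinarith
      have step4 : Real.exp 1 + l ≤ Real.exp 1 * Real.exp 1 * l := by
        have h8 : (7:ℝ) * l ≤ Real.exp 1 * Real.exp 1 * l :=
          mul_le_mul_of_nonneg_right h7 (by linarith)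
        have h9 : Real.exp 1 + l ≤ 7 * l := by linarith
        linarith
      have step5 : m ≤ Real.log (Real.exp 1 * Real.exp 1 * l) :=
        step3.trans (Real.log_le_log (by positivity) step4)
      rw [Real.log_mul (by positivity) (by linarith),
        Real.log_mul (Real.exp_ne_zero 1) (Real.exp_ne_zero 1), Real.log_exp] at step5
      linarith
    -- l ≤ 12 + B
    have hl12B : l ≤ 12 + B := by
      rcases le_or_gt t 1 with h | h
      · have hsub : l ≤ Real.exp 1 + t - 1 := by
          rw [hldef]; exact Real.log_le_sub_one_of_pos (by positivity)
        linarith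
      · have het : Real.exp 1 + t ≤ (Real.exp 1 + 1) * t := by
          nlinarith [mul_nonneg (by linarith : (0:ℝ) ≤ Real.exp 1)
            (by linarith : (0:ℝ) ≤ t - 1)]
        have h1 : l ≤ Real.log ((Real.exp 1 + 1) * t) := by
          rw [hldef]; exact Real.log_le_log (by positivity) het
        rw [Real.log_mul (by positivity) (by linarith)] at h1
        have h2 : Real.log (Real.exp 1 + 1) ≤ Real.exp 1 := by
          have := Real.log_le_sub_one_of_pos (x := Real.exp 1 + 1) (by positivity)
          linarith
        have h3 : Real.log t ≤ B := by
          rw [hBdef]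
          exact Real.log_le_log ht0 (hFdef ▸ phi19_ge_self r hr0 ht)
        linarith
    -- 12 + B ≤ (14 + 3r) l
    have hB14 : 12 + B ≤ (14 + 3 * r) * l := by
      have h1 : Real.log t ≤ l := by
        rw [hldef]; exact Real.log_le_log ht0 (by linarith [(Real.exp_pos 1).le])
      have h2 : Real.log l ≤ l := Real.log_le_self (by linarith)
      have h3 : Real.log m ≤ 3 * l := by
        have := Real.log_le_self (by linarith : (0:ℝ) ≤ m)
        linarith
      linarith [mul_le_mul_of_nonneg_left h3 hr0, hBsum, h1, h2, hl1]
    set P := Real.log (12 + B) with hPdef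
    clear_value P
    have hP2 : 2 ≤ P := by
      rw [hPdef]
      have hexp2 : Real.exp 2 ≤ 12 + B := by
        have h22 : Real.exp 2 = Real.exp 1 * Real.exp 1 := by
          rw [← Real.exp_add]; norm_num
        have hee : Real.exp 1 * Real.exp 1 < 2.7182818286 * 2.7182818286 :=
          mul_lt_mul'' he2 he2 (by positivity) (by positivity)
        have : (2.7182818286:ℝ) * 2.7182818286 ≤ 12 := by norm_num
        linarith
      calc (2:ℝ) = Real.log (Real.exp 2) := (Real.log_exp 2).symm
        _ ≤ Real.log (12 + B) := Real.log_le_log (Real.exp_pos 2) hexp2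
    -- m ≤ 2 P
    have hm2P : m ≤ 2 * P := by
      have hll : Real.log l ≤ P := by
        rw [hPdef]; exact Real.log_le_log (by linarith) hl12B
      linarith
    -- P ≤ K1 * m
    have hPK : P ≤ K1 * m := by
      have h1 : P ≤ Real.log (14 + 3 * r) + Real.log l := by
        calc P ≤ Real.log ((14 + 3 * r) * l) := by
              rw [hPdef]; exact Real.log_le_log (by linarith) hB14
          _ = Real.log (14 + 3 * r) + Real.log l :=
              Real.log_mul (by positivity) (by linarith)
      have h2 : Real.log l ≤ m := by
        rw [hmdef]
        apply Real.log_le_log (by linarith)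
        rw [hldef]
        apply Real.log_le_log (by positivity)
        have : Real.exp 1 ≤ Real.exp (Real.exp 1) := Real.exp_le_exp.mpr (by linarith)
        linarith
      have := mul_le_mul_of_nonneg_left hm1 hlog14
      have hK1m : K1 * m = m + Real.log (14 + 3 * r) * m := by rw [hK1def]; ring
      linarith
    -- rpow comparisons
    have hmP_up : m ^ r ≤ 2 ^ r * P ^ r := by
      calc m ^ r ≤ (2 * P) ^ r := Real.rpow_le_rpow (by linarith) hm2P hr0
        _ = 2 ^ r * P ^ r := Real.mul_rpow (by norm_num) (by linarith)
    have hPm_up : P ^ r ≤ K1 ^ r * m ^ r := by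
      calc P ^ r ≤ (K1 * m) ^ r := Real.rpow_le_rpow (by linarith) hPK hr0
        _ = K1 ^ r * m ^ r := Real.mul_rpow (by linarith) (by linarith)
    have hPr0 : (0:ℝ) < P ^ r := Real.rpow_pos_of_pos (by linarith) r
    have hinvt : 1 / t = s * (l * m ^ r) := by
      have hF : s * (t * l * m ^ r) = 1 := by
        rw [← hFeq, hPhi]; field_simp
      rw [div_eq_iff ht0.ne']
      linear_combination -hF
    rw [hlogs]
    have h12B : (12:ℝ) - -B = 12 + B := by ring
    rw [h12B, ← hPdef, hinvt]
    constructor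
    · -- lower bound
      have key : (12 + B) * P ^ r ≤ (l * m ^ r) * ((14 + 3 * r) * K1 ^ r) := by
        calc (12 + B) * P ^ r ≤ ((14 + 3 * r) * l) * (K1 ^ r * m ^ r) :=
              mul_le_mul hB14 hPm_up hPr0.le (mul_nonneg (by linarith) (by linarith))
          _ = (l * m ^ r) * ((14 + 3 * r) * K1 ^ r) := by ring
      have key2 : (12 + B) * P ^ r * ((14 + 3 * r) * K1 ^ r)⁻¹ ≤ l * m ^ r := by
        rw [← div_eq_mul_inv]
        exact (div_le_iff₀ hc0pos).mpr key
      calc ((14 + 3 * r) * K1 ^ r)⁻¹ * (s * (12 + B) * P ^ r)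
          = s * ((12 + B) * P ^ r * ((14 + 3 * r) * K1 ^ r)⁻¹) := by ring
        _ ≤ s * (l * m ^ r) := mul_le_mul_of_nonneg_left key2 hs0.le
    · -- upper bound
      have key : l * m ^ r ≤ 2 ^ r * ((12 + B) * P ^ r) := by
        calc l * m ^ r ≤ (12 + B) * (2 ^ r * P ^ r) :=
              mul_le_mul hl12B hmP_up (by linarith) (by linarith)
          _ = 2 ^ r * ((12 + B) * P ^ r) := by ring
      calc s * (l * m ^ r) ≤ s * (2 ^ r * ((12 + B) * P ^ r)) :=
            mul_le_mul_of_nonneg_left key hs0.le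
        _ = 2 ^ r * (s * (12 + B) * P ^ r) := by ring

end
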